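/- Let 𝒫 be a finite projective plane with collineation group G, let S ≤ G be an abelian Singer group of 𝒫, and let Q ≤ G be a subgroup normalized by S. If the order of Q is coprime to the order of S, then S centralizes Q. -/

import Mathlib

/-- A finite projective plane: points, lines, incidence; two distinct points lie on a
unique common line, two distinct lines meet in a unique point, and there exist four
points no three of which are collinear. -/
structure ProjPlane (Pt Ln : Type*) where
  incid : Pt → Ln → Prop
  line_unique : ∀ p q : Pt, p ≠ q → ∃! l : Ln, incid p l ∧ incid q l
  point_unique : ∀ l m : Ln, l ≠ m → ∃! p : Pt, incid p l ∧ incid p m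
  nondeg : ∃ f : Fin 4 → Pt, Function.Injective f ∧
    ∀ l : Ln, ∀ i j k : Fin 4, i ≠ j → j ≠ k → i ≠ k →
      ¬ (incid (f i) l ∧ incid (f j) l ∧ incid (f k) l)

/-- The plane has order `x`: every line has `x+1` points and there are `x²+x+1` points. -/
def ProjPlane.HasOrder {Pt Ln : Type*} (PP : ProjPlane Pt Ln) (x : ℕ) : Prop :=
  (∀ l : Ln, Nat.card {p : Pt // PP.incid p l} = x + 1) ∧ Nat.card Pt = x ^ 2 + x + 1

/-- `G` is a collineation group of the plane: it acts faithfully on points and acts on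
lines preserving incidence. -/
structure IsCollineation {Pt Ln : Type*} (PP : ProjPlane Pt Ln)
    (G : Type*) [Group G] [MulAction G Pt] [MulAction G Ln] : Prop where
  faithful : ∀ g : G, (∀ p : Pt, g • p = p) → g = 1
  preserves : ∀ (g : G) (p : Pt) (l : Ln), PP.incid (g • p) (g • l) ↔ PP.incid p l

/-- A subgroup `S ≤ G` is a Singer group: it acts sharply transitively on points. -/
def IsSinger (Pt : Type*) {G : Type*} [Group G] [MulAction G Pt] (S : Subgroup G) : Prop :=
  ∀ p q : Pt, ∃! s : G, s ∈ S ∧ s • p = q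


section Aux

open Subgroup MulAction Pointwise

/-- Key group-theoretic lemma: if `S` acts sharply transitively on a nonempty finite
type `Pt`, normalizes `Q`, and `Nat.card Q` is coprime to `Nat.card S`, then every
element of `Q` fixes every point. -/
theorem singer_coprime_fixes {Pt : Type*} [Finite Pt]
    {G : Type*} [Group G] [MulAction G Pt]
    (S : Subgroup G) (hSinger : ∀ p q : Pt, ∃! s : G, s ∈ S ∧ s • p = q)
    (Q : Subgroup G) (hnorm : ∀ s ∈ S, ∀ q ∈ Q, s * q * s⁻¹ ∈ Q)
    (hcop : Nat.Coprime (Nat.card Q) (Nat.card S))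
    (p₀ : Pt) (hPt2 : 2 ≤ Nat.card Pt) :
    ∀ q ∈ Q, ∀ p : Pt, q • p = p := by
  classical
  -- |S| = |Pt|
  have hbij : Function.Bijective (fun s : S => (s : G) • p₀) := by
    constructor
    · intro a b hab
      obtain ⟨s, -, huniq⟩ := hSinger p₀ ((a : G) • p₀)
      have ha := huniq a ⟨a.2, rfl⟩
      have hb := huniq b ⟨b.2, hab.symm⟩
      exact Subtype.ext (ha.trans hb.symm)
    · intro p
      obtain ⟨s, ⟨hsS, hsp⟩, -⟩ := hSinger p₀ p
      exact ⟨⟨s, hsS⟩, hsp⟩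
  have hSfin : Finite S := Finite.of_equiv Pt (Equiv.ofBijective _ hbij).symm
  have hcardS : Nat.card S = Nat.card Pt := Nat.card_eq_of_bijective _ hbij
  -- Q is finite
  have hQne : Nat.card Q ≠ 0 := by
    intro h
    rw [h, Nat.coprime_zero_left, hcardS] at hcop
    omega
  have hQfin : Finite Q := (Nat.card_ne_zero.mp hQne).2
  -- work inside the normalizer of Q
  set M := Subgroup.normalizer (Q : Set G) with hM
  have hSM : S ≤ M := by
    intro s hs
    rw [Subgroup.mem_normalizer_iff]
    intro q
    constructor
    · intro hq; exact hnorm s hs q hq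
    · intro hq
      have := hnorm s⁻¹ (inv_mem hs) _ hq
      simpa [mul_assoc] using this
  have hQM : Q ≤ M := Subgroup.le_normalizer
  set S₁ : Subgroup M := S.subgroupOf M with hS₁
  set Q₁ : Subgroup M := Q.subgroupOf M with hQ₁
  have hQ₁norm : Q₁.Normal := Subgroup.normal_in_normalizer
  set H₁ : Subgroup M := S₁ ⊔ Q₁ with hH₁
  have hS₁card : Nat.card S₁ = Nat.card S :=
    Nat.card_congr (Subgroup.subgroupOfEquivOfLe hSM).toEquiv
  have hQ₁card : Nat.card Q₁ = Nat.card Q :=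
    Nat.card_congr (Subgroup.subgroupOfEquivOfLe hQM).toEquiv
  have hS₁fin : Finite S₁ := Finite.of_equiv _ (Subgroup.subgroupOfEquivOfLe hSM).toEquiv.symm
  have hQ₁fin : Finite Q₁ := Finite.of_equiv _ (Subgroup.subgroupOfEquivOfLe hQM).toEquiv.symm
  have hprod : (↑H₁ : Set M) = (↑S₁ : Set M) * (↑Q₁ : Set M) :=
    Subgroup.mul_normal S₁ Q₁
  have hH₁fin : Finite H₁ := by
    have : ((↑S₁ : Set M) * (↑Q₁ : Set M)).Finite :=
      Set.Finite.mul (Set.finite_coe_iff.mp ‹Finite S₁›) (Set.finite_coe_iff.mp ‹Finite Q₁›)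
    rw [← hprod] at this
    exact this.to_subtype
  set Q₂ : Subgroup H₁ := Q₁.subgroupOf H₁ with hQ₂
  have hQ₂norm : Q₂.Normal := Subgroup.normal_subgroupOf
  have hQ₂card : Nat.card Q₂ = Nat.card Q := by
    rw [← hQ₁card]
    exact Nat.card_congr (Subgroup.subgroupOfEquivOfLe le_sup_right).toEquiv
  -- the map S₁ → H₁ ⧸ Q₂ is bijective
  let incl : S₁ →* H₁ := Subgroup.inclusion le_sup_left
  let φ : H₁ →* H₁ ⧸ Q₂ := QuotientGroup.mk' Q₂
  let ψ : S₁ →* H₁ ⧸ Q₂ := φ.comp incl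
  have key : ∀ g : G, g ∈ S → g ∈ Q → g = 1 := by
    intro g hgS hgQ
    have h1 : orderOf g ∣ Nat.card Q := Subgroup.orderOf_dvd_natCard Q hgQ
    have h2 : orderOf g ∣ Nat.card S := Subgroup.orderOf_dvd_natCard S hgS
    have : orderOf g ∣ 1 := hcop ▸ Nat.dvd_gcd h1 h2
    exact orderOf_eq_one_iff.mp (Nat.dvd_one.mp this)
  have hψinj : Function.Injective ψ := by
    rw [injective_iff_map_eq_one]
    intro a ha
    have hker : incl a ∈ Q₂ := (QuotientGroup.eq_one_iff _).mp ha
    have hQmem : ((a : M) : G) ∈ Q := (Subgroup.mem_subgroupOf.mp hker : (incl a : M) ∈ Q₁)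
    have hSmem : ((a : M) : G) ∈ S := a.2
    have : ((a : M) : G) = 1 := key _ hSmem hQmem
    exact Subtype.ext (Subtype.ext this)
  have hψsurj : Function.Surjective ψ := by
    intro x
    obtain ⟨h, rfl⟩ := QuotientGroup.mk'_surjective Q₂ x
    have hmem : (h : M) ∈ (↑S₁ : Set M) * (↑Q₁ : Set M) := by
      rw [← hprod]; exact h.2
    obtain ⟨s, hs, q, hq, hsq⟩ := hmem
    refine ⟨⟨s, hs⟩, ?_⟩
    show φ (incl ⟨s, hs⟩) = φ h
    rw [QuotientGroup.mk'_eq_mk']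
    refine ⟨⟨q, (le_sup_right : Q₁ ≤ H₁) hq⟩, Subgroup.mem_subgroupOf.mpr hq, ?_⟩
    exact Subtype.ext hsq
  have hquotcard : Nat.card (H₁ ⧸ Q₂) = Nat.card S := by
    rw [← hS₁card]
    exact (Nat.card_eq_of_bijective _ ⟨hψinj, hψsurj⟩).symm
  have hH₁card : Nat.card H₁ = Nat.card S * Nat.card Q := by
    rw [Subgroup.card_eq_card_quotient_mul_card_subgroup Q₂, hquotcard, hQ₂card]
  -- orbit-stabilizer
  intro q hq p
  set W : Subgroup H₁ := MulAction.stabilizer H₁ p with hW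
  have horb : MulAction.orbit H₁ p = Set.univ := by
    rw [Set.eq_univ_iff_forall]
    intro p'
    obtain ⟨s, ⟨hsS, hsp⟩, -⟩ := hSinger p p'
    refine ⟨⟨⟨s, hSM hsS⟩, (le_sup_left : S₁ ≤ H₁) (Subgroup.mem_subgroupOf.mpr hsS)⟩, hsp⟩
  have hos : Nat.card (MulAction.orbit H₁ p) * Nat.card W = Nat.card H₁ := by
    rw [← Nat.card_prod]
    exact Nat.card_congr (MulAction.orbitProdStabilizerEquivGroup H₁ p)
  have horbcard : Nat.card (MulAction.orbit H₁ p) = Nat.card S := by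
    rw [horb, hcardS]
    exact Nat.card_congr (Equiv.Set.univ Pt)
  have hWcard : Nat.card W = Nat.card Q := by
    have hSpos : 0 < Nat.card S := by rw [hcardS]; omega
    have := hos
    rw [horbcard, hH₁card] at this
    exact Nat.eq_of_mul_eq_mul_left hSpos this
  have hWQ : W ≤ Q₂ := by
    intro w hw
    have h1 : orderOf (φ w) ∣ Nat.card Q := by
      calc orderOf (φ w) ∣ orderOf w := orderOf_map_dvd φ w
        _ ∣ Nat.card W := Subgroup.orderOf_dvd_natCard W hw
        _ = Nat.card Q := hWcard
    have h2 : orderOf (φ w) ∣ Nat.card S := hquotcard ▸ orderOf_dvd_natCard (φ w)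
    have : orderOf (φ w) ∣ 1 := hcop ▸ Nat.dvd_gcd h1 h2
    have hone : φ w = 1 := orderOf_eq_one_iff.mp (Nat.dvd_one.mp this)
    exact (QuotientGroup.eq_one_iff _).mp hone
  have hWfin : Finite Q₂ := Subgroup.instFiniteSubtypeMem Q₂
  have hWeq : W = Q₂ := by
    refine Subgroup.eq_of_le_of_card_ge hWQ ?_
    rw [hWcard, hQ₂card]
  -- conclude
  have hmem : (⟨⟨q, hQM hq⟩, (le_sup_right : Q₁ ≤ H₁) (Subgroup.mem_subgroupOf.mpr hq)⟩ : H₁) ∈ W := by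
    rw [hWeq]
    exact Subgroup.mem_subgroupOf.mpr (Subgroup.mem_subgroupOf.mpr hq)
  exact hmem

end Aux

theorem stmt_5 {Pt Ln : Type*} [Finite Pt] [Finite Ln] (PP : ProjPlane Pt Ln)
    (x : ℕ) (horder : PP.HasOrder x)
    {G : Type*} [Group G] [MulAction G Pt] [MulAction G Ln]
    (hcoll : IsCollineation PP G)
    (S : Subgroup G) (hSinger : IsSinger Pt S)
    (hSab : ∀ a ∈ S, ∀ b ∈ S, a * b = b * a)
    (Q : Subgroup G) (hnorm : ∀ s ∈ S, ∀ q ∈ Q, s * q * s⁻¹ ∈ Q)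
    (hcop : Nat.Coprime (Nat.card Q) (Nat.card S)) :
    ∀ s ∈ S, ∀ q ∈ Q, s * q = q * s := by
  obtain ⟨f4, hf4inj, -⟩ := PP.nondeg
  have hPt2 : 2 ≤ Nat.card Pt := by
    have h4 : Nat.card (Fin 4) ≤ Nat.card Pt := Nat.card_le_card_of_injective f4 hf4inj
    simp only [Nat.card_eq_fintype_card, Fintype.card_fin] at h4
    omega
  have hfix := singer_coprime_fixes S hSinger Q hnorm hcop (f4 0) hPt2
  intro s hs q hq
  have : q = 1 := hcoll.faithful q (hfix q hq)
  rw [this, mul_one, one_mul]
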